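/- Let Z, Y be real normed spaces, V a real Hilbert space, K_z : Z → V and K_y : V → Y* bounded linear, and let K_y† : Y → V be the bounded linear map with ⟨K_y v, y⟩_{Y*,Y} = ⟨v, K_y† y⟩_V for all v ∈ V, y ∈ Y. Let M_z : Z → Z* and M_y : Y → Y* be bounded linear, self-adjoint and positive semi-definite, τ, σ > 0, λ ≥ 0, and assume ‖K_y† y‖_V² ≤ ⟨M_y y, y⟩ for all y ∈ Y and τλ⟨M_z z, z⟩ + τσ‖K_z z‖_V² ≤ ⟨M_z z, z⟩ for all z ∈ Z. Define Q(z, y) := τ^{−1}⟨M_z z, z⟩ + σ^{−1}⟨M_y y, y⟩ − 2⟨K_y K_z z, y⟩_{Y*,Y}. Then for all (z, y) ∈ Z × Y: (i) Q(z, y) ≥ λ⟨M_z z, z⟩ ≥ 0 (in particular Q is positive semi-definite); and (ii) for any γ_z, γ_y ≥ 0, with γ := min{γ_z τ, γ_y σ}/2, one has γ Q(z, y) ≤ γ_z⟨M_z z, z⟩ + γ_y⟨M_y y, y⟩. -/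

import Mathlib

open scoped RealInnerProductSpace

lemma stmt10_core (τ σ lam mz my a b c : ℝ) (hτ : 0 < τ) (hσ : 0 < σ)
    (hlam : 0 ≤ lam) (hmz : 0 ≤ mz) (hmy : 0 ≤ my) (ha : 0 ≤ a) (hb : 0 ≤ b)
    (hc : |c| ≤ a * b) (hy : b ^ 2 ≤ my) (hz : τ * lam * mz + τ * σ * a ^ 2 ≤ mz) :
    lam * mz ≤ τ⁻¹ * mz + σ⁻¹ * my - 2 * c ∧
      τ⁻¹ * mz + σ⁻¹ * my - 2 * c ≤ 2 * τ⁻¹ * mz + 2 * σ⁻¹ * my := by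
  have ht : τ * τ⁻¹ = 1 := mul_inv_cancel₀ hτ.ne'
  have hs : σ * σ⁻¹ = 1 := mul_inv_cancel₀ hσ.ne'
  have hσi : (0:ℝ) ≤ σ⁻¹ := by positivity
  have hτi : (0:ℝ) ≤ τ⁻¹ := by positivity
  have h1 : 2 * a * b ≤ σ * a ^ 2 + σ⁻¹ * b ^ 2 := by
    nlinarith [mul_nonneg hσi (sq_nonneg (σ * a - b)), hs]
  have h2 : lam * mz + σ * a ^ 2 ≤ τ⁻¹ * mz := by
    nlinarith [mul_le_mul_of_nonneg_left hz hτi, ht]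
  have hc1 : -(a*b) ≤ c := neg_le_of_abs_le hc
  have hc2 : c ≤ a*b := le_of_abs_le hc
  constructor
  · nlinarith
  · nlinarith

theorem stmt10 {Z Y V : Type*}
    [NormedAddCommGroup Z] [NormedSpace ℝ Z]
    [NormedAddCommGroup Y] [NormedSpace ℝ Y]
    [NormedAddCommGroup V] [InnerProductSpace ℝ V] [CompleteSpace V]
    (Kz : Z →L[ℝ] V) (Ky : V →L[ℝ] StrongDual ℝ Y) (Kyd : Y →L[ℝ] V)
    (hKyd : ∀ (v : V) (y : Y), Ky v y = ⟪v, Kyd y⟫)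
    (Mz : Z →L[ℝ] StrongDual ℝ Z) (My : Y →L[ℝ] StrongDual ℝ Y)
    (hMzsa : ∀ z w : Z, Mz z w = Mz w z) (hMzpsd : ∀ z : Z, 0 ≤ Mz z z)
    (hMysa : ∀ y w : Y, My y w = My w y) (hMypsd : ∀ y : Y, 0 ≤ My y y)
    (τ σ lam : ℝ) (hτ : 0 < τ) (hσ : 0 < σ) (hlam : 0 ≤ lam)
    (hstepy : ∀ y : Y, ‖Kyd y‖ ^ 2 ≤ My y y)
    (hstepz : ∀ z : Z, τ * lam * Mz z z + τ * σ * ‖Kz z‖ ^ 2 ≤ Mz z z) :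
    (∀ (z : Z) (y : Y),
      lam * Mz z z ≤ τ⁻¹ * Mz z z + σ⁻¹ * My y y - 2 * Ky (Kz z) y
        ∧ 0 ≤ lam * Mz z z)
    ∧ ∀ γz γy : ℝ, 0 ≤ γz → 0 ≤ γy → ∀ (z : Z) (y : Y),
        min (γz * τ) (γy * σ) / 2
            * (τ⁻¹ * Mz z z + σ⁻¹ * My y y - 2 * Ky (Kz z) y)
          ≤ γz * Mz z z + γy * My y y := by
  have key : ∀ (z : Z) (y : Y),
      lam * Mz z z ≤ τ⁻¹ * Mz z z + σ⁻¹ * My y y - 2 * Ky (Kz z) y ∧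
      τ⁻¹ * Mz z z + σ⁻¹ * My y y - 2 * Ky (Kz z) y
        ≤ 2 * τ⁻¹ * Mz z z + 2 * σ⁻¹ * My y y := by
    intro z y
    have hc : |Ky (Kz z) y| ≤ ‖Kz z‖ * ‖Kyd y‖ := by
      rw [hKyd]; exact abs_real_inner_le_norm _ _
    exact stmt10_core τ σ lam (Mz z z) (My y y) ‖Kz z‖ ‖Kyd y‖ (Ky (Kz z) y)
      hτ hσ hlam (hMzpsd z) (hMypsd y) (norm_nonneg _) (norm_nonneg _)
      hc (hstepy y) (hstepz z)
  refine ⟨fun z y => ⟨(key z y).1, mul_nonneg hlam (hMzpsd z)⟩, ?_⟩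
  intro γz γy hγz hγy z y
  set Q := τ⁻¹ * Mz z z + σ⁻¹ * My y y - 2 * Ky (Kz z) y with hQ
  have hQ0 : 0 ≤ Q := le_trans (mul_nonneg hlam (hMzpsd z)) (key z y).1
  have hQub := (key z y).2
  set g := min (γz * τ) (γy * σ) / 2 with hg
  have hg0 : 0 ≤ g := by
    have := le_min (mul_nonneg hγz hτ.le) (mul_nonneg hγy hσ.le)
    simpa [hg] using div_nonneg (this) (by norm_num : (0:ℝ) ≤ 2)
  have h1 : g * Q ≤ g * (2 * τ⁻¹ * Mz z z + 2 * σ⁻¹ * My y y) :=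
    mul_le_mul_of_nonneg_left hQub hg0
  refine h1.trans ?_
  have hgτ : 2 * g ≤ γz * τ := by
    have := min_le_left (γz * τ) (γy * σ); simp [hg]; linarith
  have hgσ : 2 * g ≤ γy * σ := by
    have := min_le_right (γz * τ) (γy * σ); simp [hg]; linarith
  have h2 : 2 * g * τ⁻¹ ≤ γz := by
    have := mul_le_mul_of_nonneg_right hgτ (inv_nonneg.2 hτ.le)
    rw [mul_assoc γz τ τ⁻¹, mul_inv_cancel₀ hτ.ne', mul_one] at this; linarith
  have h3 : 2 * g * σ⁻¹ ≤ γy := by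
    have := mul_le_mul_of_nonneg_right hgσ (inv_nonneg.2 hσ.le)
    rw [mul_assoc γy σ σ⁻¹, mul_inv_cancel₀ hσ.ne', mul_one] at this; linarith
  have := mul_le_mul_of_nonneg_right h2 (hMzpsd z)
  have := mul_le_mul_of_nonneg_right h3 (hMypsd y)
  nlinarith [hMzpsd z, hMypsd y]
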